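/- Let d ≥ 2 and suppose the functions g, f_1,…,f_d and f_{ij} (i ≠ j) defining the matrix field c are continuously differentiable (for d = 2 the f_{ij} are constants). Then for every x ∈ Δ and every index i ∈ {1,…,d}, Σ_{j≠i} c_{ij}(x)·(∂_j − ∂_i)[log g + Σ_{k=1}^d log f_k(·^k)](x) = Σ_{j≠i} (∂_j − ∂_i) c_{ij}(x); that is, c(x) ∇log( g(x) ∏_{i=1}^d f_i(x^i) ) = div c(x) at every point of Δ. -/

import Mathlib

open scoped BigOperators

/-- The open unit simplex in `ℝ^d`. -/
def openSimplex (d : ℕ) : Set (Fin d → ℝ) :=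
  {x | (∀ i, 0 < x i) ∧ ∑ i, x i = 1}

/-- Directional derivative `(∂_j - ∂_i) h (x)`, i.e. the derivative of `h` at `x`
along the direction `e_j - e_i`, which is tangent to the simplex. -/
noncomputable def dirDeriv {d : ℕ} (h : (Fin d → ℝ) → ℝ) (x : Fin d → ℝ)
    (i j : Fin d) : ℝ :=
  fderiv ℝ h x (Pi.single j 1 - Pi.single i 1)

/-- The tractable volatility matrix field:
`c_{ij}(x) = -F_{ij}(x) f_i(x^i) f_j(x^j) g(x)` for `i ≠ j` and
`c_{ii}(x) = ∑_{k ≠ i} F_{ik}(x) f_i(x^i) f_k(x^k) g(x)`.  Here `F i j x` models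
`f_{ij}(x^{-ij})`: a function that only depends on the coordinates of `x` other
than `i` and `j` (this dependency restriction is imposed as a hypothesis). -/
noncomputable def cMat {d : ℕ} (g : (Fin d → ℝ) → ℝ) (f : Fin d → ℝ → ℝ)
    (F : Fin d → Fin d → (Fin d → ℝ) → ℝ) (i j : Fin d) (x : Fin d → ℝ) : ℝ :=
  if i = j then
    ∑ k ∈ Finset.univ.filter (fun k => k ≠ i), F i k x * f i (x i) * f k (x k) * g x
  else -(F i j x * f i (x i) * f j (x j) * g x)

/-- If `F` does not depend on coordinates `i` and `j`, its derivative in the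
direction `e_j - e_i` vanishes. -/
lemma fderiv_dir_zero_of_indep {d : ℕ} (F : (Fin d → ℝ) → ℝ) (i j : Fin d)
    (hF : ContDiff ℝ 1 F)
    (hdep : ∀ x y : Fin d → ℝ, (∀ k, k ≠ i → k ≠ j → x k = y k) → F x = F y)
    (x : Fin d → ℝ) :
    fderiv ℝ F x (Pi.single j 1 - Pi.single i 1) = 0 := by
  set v : Fin d → ℝ := Pi.single j 1 - Pi.single i 1 with hv
  have hline : (fun t : ℝ => F (x + t • v)) = fun _ => F x := by
    funext t
    refine (hdep x (x + t • v) ?_).symm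
    intro k hki hkj
    simp [hv, Pi.single_apply, hki, hkj]
  have hcurve : HasDerivAt (fun t : ℝ => x + t • v) v 0 := by
    simpa using ((hasDerivAt_id (0:ℝ)).smul_const v).const_add x
  have hF' : HasFDerivAt F (fderiv ℝ F x) (x + (0:ℝ) • v) := by
    simpa using (hF.differentiable one_ne_zero x).hasFDerivAt
  have h1 : HasDerivAt (fun t : ℝ => F (x + t • v)) (fderiv ℝ F x v) 0 :=
    hF'.comp_hasDerivAt 0 hcurve
  rw [hline] at h1
  exact h1.unique (hasDerivAt_const 0 (F x))

/-- for the tractable volatility class with `C¹` ingredients,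
`c(x) ∇ log (g(x) ∏_i f_i(x^i)) = div c (x)` at every point of the open simplex,
where both sides are interpreted via the tangential directional derivatives
`(∂_j - ∂_i)`. -/
theorem statement0 {d : ℕ} (hd : 2 ≤ d)
    (g : (Fin d → ℝ) → ℝ) (f : Fin d → ℝ → ℝ)
    (F : Fin d → Fin d → (Fin d → ℝ) → ℝ)
    (hg : ContDiff ℝ 1 g) (hf : ∀ i, ContDiff ℝ 1 (f i))
    (hF : ∀ i j, ContDiff ℝ 1 (F i j))
    (hFsymm : ∀ i j, F i j = F j i)
    (hFdep : ∀ i j : Fin d, ∀ x y : Fin d → ℝ,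
      (∀ k, k ≠ i → k ≠ j → x k = y k) → F i j x = F i j y)
    (hgpos : ∀ x ∈ openSimplex d, 0 < g x)
    (hfpos : ∀ i, ∀ t ∈ Set.Ioo (0:ℝ) 1, 0 < f i t)
    (hFnn : ∀ i j : Fin d, i ≠ j → ∀ x ∈ openSimplex d, 0 ≤ F i j x) :
    ∀ x ∈ openSimplex d, ∀ i : Fin d,
      ∑ j ∈ Finset.univ.filter (fun j => j ≠ i),
        cMat g f F i j x *
          dirDeriv (fun y => Real.log (g y) + ∑ k, Real.log (f k (y k))) x i j
        = ∑ j ∈ Finset.univ.filter (fun j => j ≠ i),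
            dirDeriv (cMat g f F i j) x i j := by
  intro x hx i
  -- every coordinate lies in (0,1)
  have hxmem : ∀ k, x k ∈ Set.Ioo (0:ℝ) 1 := by
    intro k
    refine ⟨hx.1 k, ?_⟩
    obtain ⟨l, hl⟩ := Fintype.exists_ne_of_one_lt_card (by rw [Fintype.card_fin]; omega) k
    have hpos : 0 < ∑ l ∈ Finset.univ.erase k, x l :=
      Finset.sum_pos (fun l _ => hx.1 l) ⟨l, Finset.mem_erase.2 ⟨hl, Finset.mem_univ l⟩⟩
    have hsum : ∑ l ∈ Finset.univ.erase k, x l + x k = 1 := by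
      rw [Finset.sum_erase_add _ _ (Finset.mem_univ k)]; exact hx.2
    linarith
  have hgx : 0 < g x := hgpos x hx
  have hfk : ∀ k, 0 < f k (x k) := fun k => hfpos k _ (hxmem k)
  -- coordinate evaluation derivatives
  have hfev : ∀ k : Fin d, HasFDerivAt (fun y : Fin d → ℝ => f k (y k))
      (deriv (f k) (x k) • (ContinuousLinearMap.proj k :
        (Fin d → ℝ) →L[ℝ] ℝ)) x := by
    intro k
    have hproj : HasFDerivAt (fun y : Fin d → ℝ => y k)
        (ContinuousLinearMap.proj k : (Fin d → ℝ) →L[ℝ] ℝ) x :=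
      (ContinuousLinearMap.proj k : (Fin d → ℝ) →L[ℝ] ℝ).hasFDerivAt
    exact (((hf k).differentiable one_ne_zero (x k)).hasDerivAt).comp_hasFDerivAt x hproj
  have hgd : HasFDerivAt g (fderiv ℝ g x) x := (hg.differentiable one_ne_zero x).hasFDerivAt
  -- derivative of the log-sum function
  have hlog : HasFDerivAt (fun y => Real.log (g y) + ∑ k, Real.log (f k (y k)))
      ((g x)⁻¹ • fderiv ℝ g x +
        ∑ k, (f k (x k))⁻¹ • (deriv (f k) (x k) • (ContinuousLinearMap.proj k :
          (Fin d → ℝ) →L[ℝ] ℝ))) x := by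
    exact (hgd.log (ne_of_gt hgx)).add
      (HasFDerivAt.fun_sum fun k _ => (hfev k).log (ne_of_gt (hfk k)))
  refine Finset.sum_congr rfl fun j hj => ?_
  have hji : j ≠ i := (Finset.mem_filter.1 hj).2
  have hij : ¬ i = j := fun h => hji h.symm
  -- rewrite cMat i j as the explicit product
  have hc : cMat g f F i j = fun y => -(F i j y * f i (y i) * f j (y j) * g y) := by
    funext y; simp [cMat, hij]
  have hFd : HasFDerivAt (F i j) (fderiv ℝ (F i j) x) x :=
    ((hF i j).differentiable one_ne_zero x).hasFDerivAt
  have hprod : HasFDerivAt (fun y => -(F i j y * f i (y i) * f j (y j) * g y))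
      (-(((fun y => F i j y * f i (y i) * f j (y j)) x) • fderiv ℝ g x +
        g x • (((fun y => F i j y * f i (y i)) x) •
            (deriv (f j) (x j) • (ContinuousLinearMap.proj j : (Fin d → ℝ) →L[ℝ] ℝ)) +
          f j (x j) • ((F i j x) •
              (deriv (f i) (x i) • (ContinuousLinearMap.proj i : (Fin d → ℝ) →L[ℝ] ℝ)) +
            f i (x i) • fderiv ℝ (F i j) x)))) x :=
    (((hFd.mul (hfev i)).mul (hfev j)).mul hgd).neg
  have hF0 : fderiv ℝ (F i j) x (Pi.single j 1 - Pi.single i 1) = 0 :=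
    fderiv_dir_zero_of_indep (F i j) i j (hF i j) (hFdep i j) x
  rw [hc]; simp only [dirDeriv]; rw [hprod.fderiv, hlog.fderiv]
  -- evaluate the continuous linear maps at the direction
  have hsingle : ∀ k m : Fin d, (Pi.single m (1:ℝ) - Pi.single k 1) =
      fun l => (if l = m then (1:ℝ) else 0) - (if l = k then 1 else 0) := by
    intro k m; funext l; simp [Pi.single_apply]
  rw [hsingle i j] at hF0
  simp only [ContinuousLinearMap.add_apply, ContinuousLinearMap.smul_apply,
    ContinuousLinearMap.neg_apply, ContinuousLinearMap.sum_apply,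
    ContinuousLinearMap.proj_apply, smul_eq_mul, hsingle, hF0, cMat, if_neg hij]
  have hsum : ∑ k, (f k (x k))⁻¹ *
      (deriv (f k) (x k) * ((if k = j then (1:ℝ) else 0) - (if k = i then 1 else 0)))
      = (f j (x j))⁻¹ * deriv (f j) (x j) - (f i (x i))⁻¹ * deriv (f i) (x i) := by
    simp only [mul_sub, mul_ite, mul_one, mul_zero, Finset.sum_sub_distrib,
      Finset.sum_ite_eq', Finset.mem_univ, if_true]
  rw [hsum]
  have hDv := fderiv ℝ g x (fun l => (if l = j then (1:ℝ) else 0) - (if l = i then 1 else 0))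
  have hgx' : g x ≠ 0 := ne_of_gt hgx
  have hfi' : f i (x i) ≠ 0 := ne_of_gt (hfk i)
  have hfj' : f j (x j) ≠ 0 := ne_of_gt (hfk j)
  simp only [if_neg hij, if_pos rfl, if_neg hji, if_true]
  field_simp
  ring
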